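/- Let j denote the first positive root of the equation sin x = x·cos x (numerically j ≈ 4.4934). For all a, b ∈ [0, j], |b·sin a − a·sin b| ≥ |a − b| · √((a·cos a − sin a)·(b·cos b − sin b)). -/

import Mathlib

open Real Set MeasureTheory
set_option maxHeartbeats 1000000

namespace VDC

lemma aux_nonneg (F F' : ℝ → ℝ) (hd : ∀ x, HasDerivAt F (F' x) x)
    (h0 : F 0 = 0) (hp : ∀ x, 0 < x → 0 ≤ F' x) : ∀ x, 0 ≤ x → 0 ≤ F x := by
  intro x hx
  have hmono : MonotoneOn F (Ici 0) := by
    apply monotoneOn_of_deriv_nonneg (convex_Ici 0)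
      (fun y _ => (hd y).continuousAt.continuousWithinAt)
      (fun y _ => (hd y).differentiableAt.differentiableWithinAt)
    intro y hy
    rw [interior_Ici] at hy
    rw [(hd y).deriv]
    exact hp y hy
  have h := hmono self_mem_Ici hx hx
  rw [h0] at h
  exact h

lemma cos_ge2 (x : ℝ) (hx : 0 ≤ x) : 1 - x^2/2 ≤ cos x := by
  have := aux_nonneg (fun y => cos y - (1 - y^2/2)) (fun y => y - sin y)
    (fun y => by
      have h2 := (hasDerivAt_pow 2 y).div_const 2
      have := (Real.hasDerivAt_cos y).sub ((hasDerivAt_const y (1:ℝ)).sub h2)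
      refine this.congr_deriv ?_
      push_cast; ring)
    (by norm_num)
    (fun y hy => by nlinarith [Real.sin_le hy.le])
    x hx
  linarith

lemma sin_ge3 (x : ℝ) (hx : 0 ≤ x) : x - x^3/6 ≤ sin x := by
  have := aux_nonneg (fun y => sin y - (y - y^3/6)) (fun y => cos y - (1 - y^2/2))
    (fun y => by
      have h3 := (hasDerivAt_pow 3 y).div_const 6
      have := (Real.hasDerivAt_sin y).sub ((hasDerivAt_id y).sub h3)
      refine this.congr_deriv ?_
      push_cast; ring)
    (by norm_num)
    (fun y hy => by nlinarith [cos_ge2 y hy.le])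
    x hx
  linarith

lemma cos_le4 (x : ℝ) (hx : 0 ≤ x) : cos x ≤ 1 - x^2/2 + x^4/24 := by
  have := aux_nonneg (fun y => (1 - y^2/2 + y^4/24) - cos y) (fun y => sin y - (y - y^3/6))
    (fun y => by
      have h2 := (hasDerivAt_pow 2 y).div_const 2
      have h4 := (hasDerivAt_pow 4 y).div_const 24
      have := (((hasDerivAt_const y (1:ℝ)).sub h2).add h4).sub (Real.hasDerivAt_cos y)
      refine this.congr_deriv ?_
      push_cast; ring)
    (by norm_num)
    (fun y hy => by nlinarith [sin_ge3 y hy.le])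
    x hx
  linarith

lemma sin_le5 (x : ℝ) (hx : 0 ≤ x) : sin x ≤ x - x^3/6 + x^5/120 := by
  have := aux_nonneg (fun y => (y - y^3/6 + y^5/120) - sin y)
    (fun y => (1 - y^2/2 + y^4/24) - cos y)
    (fun y => by
      have h3 := (hasDerivAt_pow 3 y).div_const 6
      have h5 := (hasDerivAt_pow 5 y).div_const 120
      have := (((hasDerivAt_id y).sub h3).add h5).sub (Real.hasDerivAt_sin y)
      refine this.congr_deriv ?_
      push_cast; ring)
    (by norm_num)
    (fun y hy => by nlinarith [cos_le4 y hy.le])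
    x hx
  linarith

lemma cos_ge6 (x : ℝ) (hx : 0 ≤ x) : 1 - x^2/2 + x^4/24 - x^6/720 ≤ cos x := by
  have := aux_nonneg (fun y => cos y - (1 - y^2/2 + y^4/24 - y^6/720))
    (fun y => (y - y^3/6 + y^5/120) - sin y)
    (fun y => by
      have h2 := (hasDerivAt_pow 2 y).div_const 2
      have h4 := (hasDerivAt_pow 4 y).div_const 24
      have h6 := (hasDerivAt_pow 6 y).div_const 720
      have := (Real.hasDerivAt_cos y).sub ((((hasDerivAt_const y (1:ℝ)).sub h2).add h4).sub h6)
      refine this.congr_deriv ?_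
      push_cast; ring)
    (by norm_num)
    (fun y hy => by nlinarith [sin_le5 y hy.le])
    x hx
  linarith

lemma sin_ge7 (x : ℝ) (hx : 0 ≤ x) : x - x^3/6 + x^5/120 - x^7/5040 ≤ sin x := by
  have := aux_nonneg (fun y => sin y - (y - y^3/6 + y^5/120 - y^7/5040))
    (fun y => cos y - (1 - y^2/2 + y^4/24 - y^6/720))
    (fun y => by
      have h3 := (hasDerivAt_pow 3 y).div_const 6
      have h5 := (hasDerivAt_pow 5 y).div_const 120
      have h7 := (hasDerivAt_pow 7 y).div_const 5040
      have := (Real.hasDerivAt_sin y).sub ((((hasDerivAt_id y).sub h3).add h5).sub h7)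
      refine this.congr_deriv ?_
      push_cast; ring)
    (by norm_num)
    (fun y hy => by nlinarith [cos_ge6 y hy.le])
    x hx
  linarith

lemma key (t : ℝ) (h0 : 0 < t) :
    2*(sin t - t*cos t)^2 ≤ t^2*(t^2 - sin t^2) := by
  rcases le_or_gt t 2.3 with hc | hc
  · have hs1 : sin t ≤ t - t^3/6 + t^5/120 := sin_le5 t h0.le
    have hs2 : t - t^3/6 + t^5/120 - t^7/5040 ≤ sin t := sin_ge7 t h0.le
    have hc1 : cos t ≤ 1 - t^2/2 + t^4/24 := cos_le4 t h0.le
    have hc2 : 1 - t^2/2 + t^4/24 - t^6/720 ≤ cos t := cos_ge6 t h0.le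
    have ht2 : t^2 ≤ 5.29 := by nlinarith
    have hw2 : (t^2)^2 ≤ 5.29^2 := by
      have := mul_le_mul ht2 ht2 (sq_nonneg t) (by norm_num)
      nlinarith [this]
    have hbc1 : t*cos t ≤ t*(1 - t^2/2 + t^4/24) := by
      exact mul_le_mul_of_nonneg_left hc1 h0.le
    have hbc2 : t*(1 - t^2/2 + t^4/24 - t^6/720) ≤ t*cos t := by
      exact mul_le_mul_of_nonneg_left hc2 h0.le
    have ht3 : (0:ℝ) ≤ t^3 := by positivity
    have hslo : 0 < t - t^3/6 + t^5/120 - t^7/5040 := by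
      have e1 : 0 < t*(1 - t^2/6) := mul_pos h0 (by nlinarith)
      have e2 : 0 ≤ t^5*(1/120 - t^2/5040) := by
        apply mul_nonneg (by positivity); nlinarith
      nlinarith [e1, e2]
    have hhl : 0 ≤ sin t - t*cos t := by
      have e3 : 0 ≤ t^3*(1/3 - t^2/30 - (t^2)^2/5040) := by
        apply mul_nonneg ht3; nlinarith
      nlinarith [hs2, hbc1, e3]
    have hhh : sin t - t*cos t ≤ t^3/3 - t^5/30 + t^7/720 := by
      nlinarith [hs1, hbc2]
    have hsq : (sin t - t*cos t)^2 ≤ (t^3/3 - t^5/30 + t^7/720)^2 :=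
      sq_le_sq' (by linarith) hhh
    have hsin_sq : sin t^2 ≤ (t - t^3/6 + t^5/120)^2 :=
      sq_le_sq' (by linarith) hs1
    have hq : 0 ≤ 1/9 - 7*(t^2)^2/5400 + (t^2)^3/8640 - (t^2)^4/259200 := by
      have hw4 : (t^2)^4 ≤ 5.29^4 := by
        have := mul_le_mul hw2 hw2 (sq_nonneg (t^2)) (by norm_num)
        nlinarith [this]
      have hw3 : (0:ℝ) ≤ (t^2)^3 := by positivity
      linarith [hw2, hw4, hw3]
    have hpoly : 2*(t^3/3 - t^5/30 + t^7/720)^2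
        ≤ t^2*(t^2 - (t - t^3/6 + t^5/120)^2) := by
      have := mul_nonneg (pow_nonneg h0.le 6) hq
      linarith [this]
    have h5 : t^2*sin t^2 ≤ t^2*(t - t^3/6 + t^5/120)^2 :=
      mul_le_mul_of_nonneg_left hsin_sq (sq_nonneg t)
    linarith [hsq, hpoly, h5]
  · have hs : sin t^2 ≤ 1 := sin_sq_le_one t
    have h1 : -(1+t) ≤ sin t - t*cos t := by
      nlinarith [neg_one_le_sin t, cos_le_one t, neg_one_le_cos t, sin_le_one t]
    have h2 : sin t - t*cos t ≤ 1+t := by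
      nlinarith [neg_one_le_sin t, cos_le_one t, neg_one_le_cos t, sin_le_one t]
    have h3 : (sin t - t*cos t)^2 ≤ (1+t)^2 := by nlinarith [h1, h2]
    have h4 : t^2*(t^2-1) ≤ t^2*(t^2 - sin t^2) := by
      apply mul_le_mul_of_nonneg_left (by linarith) (sq_nonneg t)
    have h6 : 2*(1+t)^2 ≤ t^2*(t^2-1) := by nlinarith [hc, sq_nonneg (t-2.3), sq_nonneg t]
    linarith [h3, h4, h6]
lemma hpos {j : ℝ} (hj : 0 < j) (hroot : sin j = j*cos j)
    (hfirst : ∀ x, 0 < x → x < j → sin x ≠ x*cos x) :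
    ∀ x, 0 < x → x < j → 0 < sin x - x*cos x := by
  have hcont : Continuous fun y : ℝ => sin y - y*cos y :=
    continuous_sin.sub (continuous_id.mul continuous_cos)
  have hmono : StrictMonoOn (fun y : ℝ => sin y - y*cos y) (Icc 0 π) := by
    apply strictMonoOn_of_deriv_pos (convex_Icc 0 π) hcont.continuousOn
    intro y hy
    rw [interior_Icc] at hy
    have hd : HasDerivAt (fun y : ℝ => sin y - y*cos y) (y * sin y) y := by
      have := (Real.hasDerivAt_sin y).sub ((hasDerivAt_id y).mul (Real.hasDerivAt_cos y))
      refine this.congr_deriv ?_; simp only [id_eq]; ring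
    rw [hd.deriv]
    exact mul_pos hy.1 (Real.sin_pos_of_pos_of_lt_pi hy.1 hy.2)
  have hpi : ∀ x, 0 < x → x ≤ π → 0 < sin x - x*cos x := by
    intro x h1 h2
    have := hmono (left_mem_Icc.2 Real.pi_pos.le) ⟨h1.le, h2⟩ h1
    simpa using this
  intro x hx hxj
  rcases le_or_gt x π with hle | hlt
  · exact hpi x hx hle
  by_contra hcon
  push_neg at hcon
  have hπ0 : 0 < sin π - π*cos π := by
    simp [Real.sin_pi, Real.cos_pi]
    linarith [Real.pi_pos]
  obtain ⟨z, hz, hz0⟩ := intermediate_value_Icc' hlt.le hcont.continuousOn ⟨hcon, hπ0.le⟩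
  refine hfirst z (lt_of_lt_of_le Real.pi_pos hz.1) (lt_of_le_of_lt hz.2 hxj) ?_
  have : sin z - z*cos z = 0 := hz0
  linarith

lemma core {j : ℝ} (hj : 0 < j) (hroot : sin j = j*cos j)
    (hfirst : ∀ x, 0 < x → x < j → sin x ≠ x*cos x)
    {a b : ℝ} (ha : 0 < a) (hab : a < b) (hbj : b < j) :
    (b - a)*Real.sqrt ((sin a - a*cos a)*(sin b - b*cos b)) ≤ b*sin a - a*sin b := by
  have hb0 : 0 < b := lt_trans ha hab
  have haj : a < j := lt_trans hab hbj
  have hP := hpos hj hroot hfirst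
  set φ : ℝ → ℝ := fun t => (sin t - t*cos t)/t^2 with hφ
  have hφcont : ∀ (s : Set ℝ), (∀ x ∈ s, x ≠ 0) → ContinuousOn φ s := by
    intro s hs
    exact ((continuous_sin.sub (continuous_id.mul continuous_cos)).continuousOn).div
      ((continuous_pow 2).continuousOn) (fun x hx => pow_ne_zero 2 (hs x hx))
  -- FTC
  have hderiv : ∀ x ∈ uIcc a b, HasDerivAt (fun y => sin y / y) (-φ x) x := by
    intro x hx
    rw [uIcc_of_le hab.le] at hx
    have hx0 : x ≠ 0 := (lt_of_lt_of_le ha hx.1).ne'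
    have := (Real.hasDerivAt_sin x).div (hasDerivAt_id x) hx0
    refine this.congr_deriv ?_
    simp only [hφ, id_eq]
    field_simp
    ring
  have hφint : IntervalIntegrable φ volume a b := by
    apply ContinuousOn.intervalIntegrable
    apply hφcont
    intro x hx; rw [uIcc_of_le hab.le] at hx; exact (lt_of_lt_of_le ha hx.1).ne'
  have hFTC : ∫ t in a..b, φ t = sin a / a - sin b / b := by
    have h1 : ∫ x in a..b, -φ x = sin b / b - sin a / a :=
      intervalIntegral.integral_eq_sub_of_hasDerivAt hderiv hφint.neg
    have h2 : ∫ x in a..b, -φ x = -∫ x in a..b, φ x := intervalIntegral.integral_neg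
    linarith [h1, h2]
  -- concavity of l = log φ
  have hD : interior (Ioo (0:ℝ) j) = Ioo 0 j := isOpen_Ioo.interior_eq
  set l : ℝ → ℝ := fun t => Real.log (sin t - t*cos t) - 2*Real.log t with hl
  set l' : ℝ → ℝ := fun t => (t*sin t)/(sin t - t*cos t) - 2/t with hl'
  have hhd : ∀ x : ℝ, HasDerivAt (fun t : ℝ => sin t - t*cos t) (x*sin x) x := by
    intro x
    have := (Real.hasDerivAt_sin x).sub ((hasDerivAt_id x).mul (Real.hasDerivAt_cos x))
    refine this.congr_deriv ?_; simp only [id_eq]; ring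
  have hld : ∀ x ∈ Ioo (0:ℝ) j, HasDerivAt l (l' x) x := by
    intro x hx
    have hx0 : x ≠ 0 := hx.1.ne'
    have hh0 : sin x - x*cos x ≠ 0 := (hP x hx.1 hx.2).ne'
    have h1 : HasDerivAt (fun t => Real.log (sin t - t*cos t))
        ((x*sin x)/(sin x - x*cos x)) x := by
      have := (hhd x).log hh0
      convert this using 1
    have h2 : HasDerivAt (fun t : ℝ => 2*Real.log t) (2/x) x := by
      have := (Real.hasDerivAt_log hx0).const_mul (2:ℝ)
      refine this.congr_deriv ?_ <;> ring
    exact h1.sub h2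
  have hld2 : ∀ x ∈ Ioo (0:ℝ) j, HasDerivAt l'
      ((sin x^2 - x^2)/(sin x - x*cos x)^2 + 2/x^2) x := by
    intro x hx
    have hx0 : x ≠ 0 := hx.1.ne'
    have hh0 : sin x - x*cos x ≠ 0 := (hP x hx.1 hx.2).ne'
    have hnum : HasDerivAt (fun t : ℝ => t*sin t) (sin x + x*cos x) x := by
      have := (hasDerivAt_id x).mul (Real.hasDerivAt_sin x)
      refine this.congr_deriv ?_; simp only [id_eq]; ring
    have h1 : HasDerivAt (fun t : ℝ => (t*sin t)/(sin t - t*cos t))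
        (((sin x + x*cos x)*(sin x - x*cos x) - (x*sin x)*(x*sin x))/(sin x - x*cos x)^2) x :=
      hnum.div (hhd x) hh0
    have h2 : HasDerivAt (fun t : ℝ => 2/t) (-(2/x^2)) x := by
      simp only [div_eq_mul_inv]
      have := (hasDerivAt_inv hx0).const_mul (2:ℝ)
      refine this.congr_deriv ?_ <;> ring
    have h3 := h1.sub h2
    have hnumeq : (sin x + x*cos x)*(sin x - x*cos x) - (x*sin x)*(x*sin x) = sin x^2 - x^2 := by
      linear_combination (-(x^2)) * Real.sin_sq_add_cos_sq x
    refine h3.congr_deriv ?_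
    rw [hnumeq, sub_neg_eq_add]
  have hcontl : ContinuousOn l (Ioo 0 j) := by
    apply ContinuousOn.sub
    · apply ContinuousOn.log ((continuous_sin.sub (continuous_id.mul continuous_cos)).continuousOn)
      intro x hx; exact (hP x hx.1 hx.2).ne'
    · apply continuousOn_const.mul
      apply Real.continuousOn_log.mono
      intro x hx
      simpa using hx.1.ne'
  have hconc : ConcaveOn ℝ (Ioo 0 j) l := by
    apply concaveOn_of_hasDerivWithinAt2_nonpos (convex_Ioo 0 j) hcontl
      (f' := l') (f'' := fun x => (sin x^2 - x^2)/(sin x - x*cos x)^2 + 2/x^2)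
    · intro x hx
      rw [hD] at hx ⊢
      exact (hld x hx).hasDerivWithinAt
    · intro x hx
      rw [hD] at hx ⊢
      exact (hld2 x hx).hasDerivWithinAt
    · intro x hx
      rw [hD] at hx
      have hkey := key x hx.1
      have hh := hP x hx.1 hx.2
      have hnum2 : (sin x^2 - x^2)*x^2 + 2*(sin x - x*cos x)^2 ≤ 0 := by nlinarith [hkey]
      rw [div_add_div _ _ (ne_of_gt (pow_pos hh 2)) (ne_of_gt (pow_pos hx.1 2))]
      apply div_nonpos_of_nonpos_of_nonneg (by linarith [hnum2])
      positivity
  have hamem : a ∈ Ioo (0:ℝ) j := ⟨ha, haj⟩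
  have hbmem : b ∈ Ioo (0:ℝ) j := ⟨hb0, hbj⟩
  have hmem : ∀ t ∈ Icc a b, t ∈ Ioo (0:ℝ) j ∧ a + b - t ∈ Ioo (0:ℝ) j := by
    intro t ht
    exact ⟨⟨lt_of_lt_of_le ha ht.1, lt_of_le_of_lt ht.2 hbj⟩,
      ⟨by linarith [ht.2], by linarith [ht.1]⟩⟩
  have hsum : ∀ t ∈ Icc a b, l a + l b ≤ l t + l (a+b-t) := by
    intro t ht
    have hba : (0:ℝ) < b - a := by linarith
    set lam := (b - t)/(b - a) with hlam
    have hlam0 : 0 ≤ lam := div_nonneg (by linarith [ht.2]) hba.le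
    have hlam1 : lam ≤ 1 := (div_le_one hba).2 (by linarith [ht.1])
    have hmul1 : lam*a + (1-lam)*b = t := by
      rw [hlam]; field_simp [hba.ne']; ring
    have hmul2 : (1-lam)*a + lam*b = a+b-t := by
      rw [hlam]; field_simp [hba.ne']; ring
    have h1 := hconc.2 hamem hbmem hlam0 (by linarith : (0:ℝ) ≤ 1 - lam) (by ring)
    have h2 := hconc.2 hamem hbmem (by linarith : (0:ℝ) ≤ 1 - lam) hlam0 (by ring)
    simp only [smul_eq_mul] at h1 h2
    rw [hmul1] at h1
    rw [hmul2] at h2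
    linarith [h1, h2]
  have hexp : ∀ x ∈ Ioo (0:ℝ) j, Real.exp (l x) = φ x := by
    intro x hx
    have h1 : Real.exp (Real.log (sin x - x*cos x)) = sin x - x*cos x :=
      Real.exp_log (hP x hx.1 hx.2)
    have h2 : Real.exp (2*Real.log x) = x^2 := by
      rw [show (2:ℝ)*Real.log x = Real.log (x^2) by rw [Real.log_pow]; push_cast; ring]
      exact Real.exp_log (pow_pos hx.1 2)
    simp only [hl, hφ]
    rw [Real.exp_sub, h1, h2]
  have hφpos : ∀ x ∈ Ioo (0:ℝ) j, 0 < φ x := by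
    intro x hx
    exact div_pos (hP x hx.1 hx.2) (pow_pos hx.1 2)
  have hprod : ∀ t ∈ Icc a b, φ a * φ b ≤ φ t * φ (a+b-t) := by
    intro t ht
    obtain ⟨htm, hsm⟩ := hmem t ht
    have h := Real.exp_le_exp.2 (hsum t ht)
    rw [Real.exp_add, Real.exp_add, hexp a hamem, hexp b hbmem, hexp t htm, hexp _ hsm] at h
    exact h
  have hpt : ∀ t ∈ Icc a b, Real.sqrt (φ a * φ b) ≤ (φ t + φ (a+b-t))/2 := by
    intro t ht
    obtain ⟨htm, hsm⟩ := hmem t ht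
    have h1 : Real.sqrt (φ a * φ b) ≤ Real.sqrt (φ t * φ (a+b-t)) :=
      Real.sqrt_le_sqrt (hprod t ht)
    have hnn : 0 ≤ (φ t + φ (a+b-t))/2 := by
      linarith [hφpos t htm, hφpos _ hsm]
    have h3 : φ t * φ (a+b-t) ≤ ((φ t + φ (a+b-t))/2)^2 := by
      nlinarith [sq_nonneg (φ t - φ (a+b-t))]
    have h2 : Real.sqrt (φ t * φ (a+b-t)) ≤ (φ t + φ (a+b-t))/2 := by
      calc Real.sqrt (φ t * φ (a+b-t)) ≤ Real.sqrt (((φ t + φ (a+b-t))/2)^2) :=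
            Real.sqrt_le_sqrt h3
        _ = (φ t + φ (a+b-t))/2 := Real.sqrt_sq hnn
    linarith
  have hIccne : ∀ x ∈ Icc a b, x ≠ 0 := fun x hx => (lt_of_lt_of_le ha hx.1).ne'
  have hφcontI : ContinuousOn φ (Icc a b) := hφcont _ hIccne
  have hreflcont : ContinuousOn (fun t => φ (a+b-t)) (Icc a b) := by
    apply ContinuousOn.comp hφcontI ((continuous_const.sub continuous_id).continuousOn)
    intro t ht
    simp only [Pi.sub_apply, id_eq, Set.mem_Icc]
    exact ⟨by linarith [ht.2], by linarith [ht.1]⟩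
  have hint2 : IntervalIntegrable (fun t => φ (a+b-t)) volume a b := by
    apply ContinuousOn.intervalIntegrable
    rw [uIcc_of_le hab.le]
    exact hreflcont
  have hintavg : IntervalIntegrable (fun t => (φ t + φ (a+b-t))/2) volume a b :=
    (hφint.add hint2).div_const 2
  have hstep : (b-a)*Real.sqrt (φ a * φ b) ≤ ∫ t in a..b, φ t := by
    have hm : ∫ _t in a..b, Real.sqrt (φ a * φ b) ≤ ∫ t in a..b, (φ t + φ (a+b-t))/2 :=
      intervalIntegral.integral_mono_on hab.le intervalIntegrable_const hintavg hpt
    rw [intervalIntegral.integral_const, smul_eq_mul] at hm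
    have hrefl : ∫ t in a..b, φ (a+b-t) = ∫ t in a..b, φ t := by
      have h := intervalIntegral.integral_comp_sub_left (a := a) (b := b) φ (a+b)
      simpa using h
    have havg : ∫ t in a..b, (φ t + φ (a+b-t))/2 = ∫ t in a..b, φ t := by
      rw [intervalIntegral.integral_div, intervalIntegral.integral_add hφint hint2, hrefl]
      ring
    rw [havg] at hm
    exact hm
  have hsa : sin a - a*cos a = a^2*φ a := by
    have h : φ a = (sin a - a*cos a)/a^2 := rfl
    rw [h]; field_simp
  have hsb : sin b - b*cos b = b^2*φ b := by
    have h : φ b = (sin b - b*cos b)/b^2 := rfl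
    rw [h]; field_simp
  have hsqrt : Real.sqrt ((sin a - a*cos a)*(sin b - b*cos b))
      = (a*b)*Real.sqrt (φ a * φ b) := by
    rw [show (sin a - a*cos a)*(sin b - b*cos b) = (a*b)^2*(φ a * φ b) by
      rw [hsa, hsb]; ring]
    rw [Real.sqrt_mul (sq_nonneg (a*b)), Real.sqrt_sq (mul_pos ha hb0).le]
  calc (b - a)*Real.sqrt ((sin a - a*cos a)*(sin b - b*cos b))
      = (a*b)*((b-a)*Real.sqrt (φ a * φ b)) := by rw [hsqrt]; ring
    _ ≤ (a*b)*(∫ t in a..b, φ t) :=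
        mul_le_mul_of_nonneg_left hstep (mul_pos ha hb0).le
    _ = b*sin a - a*sin b := by
        rw [hFTC]
        field_simp
lemma main_le {j : ℝ} (hj : 0 < j) (hroot : sin j = j*cos j)
    (hfirst : ∀ x, 0 < x → x < j → sin x ≠ x*cos x)
    {a b : ℝ} (ha : a ∈ Icc 0 j) (hb : b ∈ Icc 0 j) (hab : a ≤ b) :
    |b*sin a - a*sin b| ≥ |a - b| * Real.sqrt ((a*cos a - sin a)*(b*cos b - sin b)) := by
  obtain ⟨ha0, haj⟩ := ha
  obtain ⟨hb0, hbj⟩ := hb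
  rcases eq_or_lt_of_le hab with heq | hlt
  · subst heq
    simp [sub_self]
  rcases eq_or_lt_of_le ha0 with heq0 | ha0'
  · subst heq0
    simp
  rcases eq_or_lt_of_le hbj with heqj | hbj'
  · have hz : b*cos b - sin b = 0 := by rw [heqj]; linarith [hroot]
    rw [show (a*cos a - sin a)*(b*cos b - sin b) = 0 by rw [hz, mul_zero],
      Real.sqrt_zero, mul_zero]
    exact abs_nonneg _
  have hcore := core hj hroot hfirst ha0' hlt hbj'
  have harg : (a*cos a - sin a)*(b*cos b - sin b)
      = (sin a - a*cos a)*(sin b - b*cos b) := by ring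
  rw [harg, abs_sub_comm a b, abs_of_nonneg (by linarith : (0:ℝ) ≤ b - a)]
  calc |b*sin a - a*sin b| ≥ b*sin a - a*sin b := le_abs_self _
    _ ≥ (b-a)*Real.sqrt ((sin a - a*cos a)*(sin b - b*cos b)) := hcore

end VDC

theorem vanDerCorput_sin_half (j : ℝ) (hj : 0 < j) (hroot : Real.sin j = j * Real.cos j)
    (hfirst : ∀ x, 0 < x → x < j → Real.sin x ≠ x * Real.cos x)
    (a b : ℝ) (ha : a ∈ Set.Icc 0 j) (hb : b ∈ Set.Icc 0 j) :
    |b * Real.sin a - a * Real.sin b| ≥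
      |a - b| * Real.sqrt ((a * Real.cos a - Real.sin a) * (b * Real.cos b - Real.sin b)) := by
  rcases le_total a b with hab | hab
  · exact VDC.main_le hj hroot hfirst ha hb hab
  · have h := VDC.main_le hj hroot hfirst hb ha hab
    calc |b * Real.sin a - a * Real.sin b| = |a * Real.sin b - b * Real.sin a| :=
          abs_sub_comm _ _
      _ ≥ |b - a| * Real.sqrt ((b*Real.cos b - Real.sin b)*(a*Real.cos a - Real.sin a)) := h
      _ = |a - b| * Real.sqrt ((a*Real.cos a - Real.sin a)*(b*Real.cos b - Real.sin b)) := by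
          rw [abs_sub_comm, mul_comm (b*Real.cos b - Real.sin b)]
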